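/- Given norms p₀, p₁ on ℝ^d and 0 < t < 1, the double dual of the geometric mean p_t(v) = p₀(v)^{1−t} p₁(v)^t is equivalent, with constants depending only on d, to the dual of the geometric mean of the dual norms: p_t**(v) ≈ (p₀*(·)^{1−t} p₁*(·)^t)*(v) for all v ∈ ℝ^d. -/

import Mathlib

open scoped RealInnerProductSpace

/-- A norm as a plain function on ℝ^d. -/
def IsNormFun {d : ℕ} (p : EuclideanSpace ℝ (Fin d) → ℝ) : Prop :=
  (∀ u v, p (u + v) ≤ p u + p v) ∧ (∀ (a : ℝ) v, p (a • v) = |a| * p v) ∧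
    (∀ v, p v = 0 → v = 0)

/-- The dual functional `q*(v) = sup_{w ≠ 0} |⟨v,w⟩| / q(w)`. -/
noncomputable def dualFn {d : ℕ} (q : EuclideanSpace ℝ (Fin d) → ℝ)
    (v : EuclideanSpace ℝ (Fin d)) : ℝ :=
  ⨆ w : {w : EuclideanSpace ℝ (Fin d) // w ≠ 0}, |⟪v, (w : EuclideanSpace ℝ (Fin d))⟫| / q w

namespace DDGM
open scoped Matrix
variable {d : ℕ}
local notation "E" => EuclideanSpace ℝ (Fin d)

lemma nf_zero {p : E → ℝ} (hp : IsNormFun p) : p 0 = 0 := by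
  have := hp.2.1 0 0
  simpa using this

lemma nf_nonneg {p : E → ℝ} (hp : IsNormFun p) (v : E) : 0 ≤ p v := by
  have h1 := hp.1 v (-v)
  have h2 : p (-v) = p v := by
    have := hp.2.1 (-1) v; simpa using this
  have h3 : p (v + -v) = 0 := by simpa using nf_zero hp
  nlinarith [h1, h2, h3]

lemma nf_pos {p : E → ℝ} (hp : IsNormFun p) {v : E} (hv : v ≠ 0) : 0 < p v := by
  rcases lt_or_eq_of_le (nf_nonneg hp v) with h | h
  · exact h
  · exact absurd (hp.2.2 v h.symm) hv

lemma nf_sum {p : E → ℝ} (hp : IsNormFun p) {ι : Type*} (s : Finset ι) (f : ι → E) :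
    p (∑ i ∈ s, f i) ≤ ∑ i ∈ s, p (f i) := by
  classical
  induction s using Finset.induction with
  | empty => simp [nf_zero hp]
  | insert _ _ h ih =>
    rw [Finset.sum_insert h, Finset.sum_insert h]
    exact le_trans (hp.1 _ _) (by linarith)

lemma apply_le_norm (x : E) (i : Fin d) : |x i| ≤ ‖x‖ := by
  rw [EuclideanSpace.norm_eq]
  rw [show |x i| = Real.sqrt ((x i)^2) from (Real.sqrt_sq_eq_abs _).symm]
  apply Real.sqrt_le_sqrt
  have : x i ^ 2 = ‖x i‖ ^ 2 := by rw [Real.norm_eq_abs, sq_abs]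
  rw [this]
  exact Finset.single_le_sum (f := fun j => ‖x j‖^2) (fun j _ => sq_nonneg _) (Finset.mem_univ i)

lemma sum_abs_le_sqrt (c : Fin d → ℝ) :
    ∑ i, |c i| ≤ Real.sqrt d * Real.sqrt (∑ i, (c i)^2) := by
  rw [← Real.sqrt_mul (by positivity)]
  rw [show ∑ i, |c i| = Real.sqrt ((∑ i, |c i|)^2) by
    rw [Real.sqrt_sq (by positivity)]]
  apply Real.sqrt_le_sqrt
  have := sq_sum_le_card_mul_sum_sq (s := (Finset.univ : Finset (Fin d))) (f := fun i => |c i|)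
  simpa [sq_abs] using this

lemma nf_upper {p : E → ℝ} (hp : IsNormFun p) :
    ∃ C : ℝ, 0 < C ∧ ∀ v, p v ≤ C * ‖v‖ := by
  classical
  set b := EuclideanSpace.basisFun (Fin d) ℝ with hb
  have hnn : 0 ≤ ∑ i, p (b i) := Finset.sum_nonneg fun i _ => nf_nonneg hp _
  refine ⟨(∑ i, p (b i)) + 1, by linarith, fun v => ?_⟩
  have hrepr : ∑ i, v i • b i = v := by
    have := b.sum_repr v
    simpa [hb, EuclideanSpace.basisFun_repr] using this
  calc p v = p (∑ i, v i • b i) := by rw [hrepr]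
    _ ≤ ∑ i, p (v i • b i) := nf_sum hp _ _
    _ = ∑ i, |v i| * p (b i) := by simp [hp.2.1]
    _ ≤ ∑ i, ‖v‖ * p (b i) := by
        refine Finset.sum_le_sum fun i _ => ?_
        exact mul_le_mul_of_nonneg_right (apply_le_norm v i) (nf_nonneg hp _)
    _ = (∑ i, p (b i)) * ‖v‖ := by rw [← Finset.mul_sum, mul_comm]
    _ ≤ ((∑ i, p (b i)) + 1) * ‖v‖ := by
        have := norm_nonneg v; nlinarith

lemma nf_lipschitz {p : E → ℝ} (hp : IsNormFun p) {C : ℝ} (hC : ∀ v, p v ≤ C * ‖v‖) :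
    ∀ x y : E, |p x - p y| ≤ C * ‖x - y‖ := by
  intro x y
  have hxy : p x - p y ≤ p (x - y) := by
    have := hp.1 (x - y) y; simpa using this
  have hyx : p y - p x ≤ p (x - y) := by
    have h1 := hp.1 (y - x) x
    have h2 : p (y - x) = p (x - y) := by
      have := hp.2.1 (-1) (x - y); simpa [neg_sub] using this
    simp only [sub_add_cancel] at h1
    linarith
  have := hC (x - y)
  rw [abs_sub_le_iff]
  constructor <;> linarith

lemma nf_continuous {p : E → ℝ} (hp : IsNormFun p) : Continuous p := by
  obtain ⟨C, hC0, hC⟩ := nf_upper hp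
  have := nf_lipschitz hp hC
  apply (LipschitzWith.of_dist_le_mul (K := C.toNNReal) (f := p) ?_).continuous
  intro x y
  rw [Real.dist_eq, dist_eq_norm, Real.coe_toNNReal _ hC0.le]
  exact this x y

lemma nf_lower (hd : 0 < d) {p : E → ℝ} (hp : IsNormFun p) :
    ∃ c : ℝ, 0 < c ∧ ∀ v, c * ‖v‖ ≤ p v := by
  have hsph : (Metric.sphere (0:E) 1).Nonempty := by
    refine ⟨EuclideanSpace.single ⟨0, hd⟩ (1:ℝ), ?_⟩
    simp [EuclideanSpace.norm_single]
  obtain ⟨x₀, hx₀s, hx₀min⟩ := (isCompact_sphere (0:E) 1).exists_isMinOn hsph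
    (nf_continuous hp).continuousOn
  have hx₀norm : ‖x₀‖ = 1 := by simpa using hx₀s
  have hx₀ne : x₀ ≠ 0 := by intro h; rw [h] at hx₀norm; simp at hx₀norm
  refine ⟨p x₀, nf_pos hp hx₀ne, fun v => ?_⟩
  rcases eq_or_ne v 0 with rfl | hv
  · simp [nf_zero hp]
  · have hvn : ‖v‖ ≠ 0 := norm_ne_zero_iff.mpr hv
    have hmem : ‖v‖⁻¹ • v ∈ Metric.sphere (0:E) 1 := by
      simp [norm_smul, abs_of_nonneg (inv_nonneg.mpr (norm_nonneg v)),
        inv_mul_cancel₀ hvn]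
    have hmin : p x₀ ≤ p (‖v‖⁻¹ • v) := hx₀min hmem
    have heq : p (‖v‖⁻¹ • v) = ‖v‖⁻¹ * p v := by
      rw [hp.2.1, abs_of_nonneg (inv_nonneg.mpr (norm_nonneg v))]
    rw [heq] at hmin
    have hvpos : (0:ℝ) < ‖v‖ := norm_pos_iff.mpr hv
    calc p x₀ * ‖v‖ ≤ (‖v‖⁻¹ * p v) * ‖v‖ := by
          exact mul_le_mul_of_nonneg_right hmin hvpos.le
      _ = p v := by field_simp

lemma nonempty_ne_zero (hd : 0 < d) : Nonempty {w : E // w ≠ 0} := by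
  refine ⟨⟨EuclideanSpace.single ⟨0, hd⟩ (1:ℝ), ?_⟩⟩
  intro h
  have := congrArg (fun x => ‖x‖) h
  simp [EuclideanSpace.norm_single] at this

lemma dual_bddAbove {q : E → ℝ} {c : ℝ} (hc : 0 < c) (hq : ∀ w, c * ‖w‖ ≤ q w) (v : E) :
    BddAbove (Set.range fun w : {w : E // w ≠ 0} =>
      |⟪v, (w : E)⟫| / q w) := by
  refine ⟨‖v‖ / c, ?_⟩
  rintro x ⟨w, rfl⟩
  have hw : (0:ℝ) < ‖(w : E)‖ := norm_pos_iff.mpr w.2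
  have hqw : 0 < q w := lt_of_lt_of_le (by positivity) (hq w)
  rw [div_le_div_iff₀ hqw hc]
  have h1 : |⟪v, (w : E)⟫| ≤ ‖v‖ * ‖(w : E)‖ := abs_real_inner_le_norm _ _
  nlinarith [hq (w : E), abs_nonneg ⟪v, (w : E)⟫, norm_nonneg v]

lemma dual_ratio_le {q : E → ℝ} {c : ℝ} (hc : 0 < c) (hq : ∀ w, c * ‖w‖ ≤ q w)
    (v : E) {w : E} (hw : w ≠ 0) : |⟪v, w⟫| / q w ≤ dualFn q v :=
  le_ciSup (dual_bddAbove hc hq v) (⟨w, hw⟩ : {w : E // w ≠ 0})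

lemma dual_pairing {q : E → ℝ} {c : ℝ} (hc : 0 < c) (hq : ∀ w, c * ‖w‖ ≤ q w)
    (v : E) {w : E} (hw : w ≠ 0) : |⟪v, w⟫| ≤ dualFn q v * q w := by
  have hqw : 0 < q w := lt_of_lt_of_le (mul_pos hc (norm_pos_iff.mpr hw)) (hq w)
  have := dual_ratio_le hc hq v hw
  rw [div_le_iff₀ hqw] at this
  exact this

lemma dual_nonneg {q : E → ℝ} (hq : ∀ w, 0 ≤ q w) (v : E) : 0 ≤ dualFn q v :=
  Real.iSup_nonneg fun w => div_nonneg (abs_nonneg _) (hq w)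

lemma dual_le (hd : 0 < d) {q : E → ℝ} (hqpos : ∀ w, w ≠ 0 → 0 < q w) {v : E} {M : ℝ}
    (h : ∀ w, w ≠ 0 → |⟪v, w⟫| ≤ M * q w) : dualFn q v ≤ M := by
  haveI := nonempty_ne_zero hd
  refine ciSup_le fun w => ?_
  rw [div_le_iff₀ (hqpos w w.2)]
  exact h w w.2

lemma dual_lower {q : E → ℝ} {c C : ℝ} (hc : 0 < c) (hC : 0 < C)
    (hq : ∀ w, c * ‖w‖ ≤ q w) (hq' : ∀ w, q w ≤ C * ‖w‖) (v : E) :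
    ‖v‖ / C ≤ dualFn q v := by
  rcases eq_or_ne v 0 with rfl | hv
  · simp only [norm_zero, zero_div]
    exact dual_nonneg (fun w => le_trans (by positivity) (hq w)) 0
  · have h := dual_ratio_le hc hq v hv
    have hvpos : (0:ℝ) < ‖v‖ := norm_pos_iff.mpr hv
    have hqv : 0 < q v := lt_of_lt_of_le (by positivity) (hq v)
    have hinner : ⟪v, v⟫ = ‖v‖ ^ 2 := real_inner_self_eq_norm_sq v
    refine le_trans ?_ h
    rw [hinner, abs_of_nonneg (by positivity), div_le_div_iff₀ hC hqv]
    have := hq' v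
    nlinarith
lemma dual_zero (hd : 0 < d) (q : E → ℝ) : dualFn q 0 = 0 := by
  haveI := nonempty_ne_zero hd
  have : ∀ w : {w : E // w ≠ 0}, |⟪(0:E), (w:E)⟫| / q w = 0 := by
    intro w; simp
  rw [dualFn]
  simp only [this]
  exact ciSup_const

lemma dual_add (hd : 0 < d) {q : E → ℝ} {c : ℝ} (hc : 0 < c) (hq : ∀ w, c * ‖w‖ ≤ q w)
    (u v : E) : dualFn q (u + v) ≤ dualFn q u + dualFn q v := by
  haveI := nonempty_ne_zero hd
  refine ciSup_le fun w => ?_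
  have hqw : 0 < q (w:E) := lt_of_lt_of_le (mul_pos hc (norm_pos_iff.mpr w.2)) (hq w)
  have habs : |⟪u + v, (w:E)⟫| ≤ |⟪u, (w:E)⟫| + |⟪v, (w:E)⟫| := by
    rw [inner_add_left]; exact abs_add_le _ _
  calc |⟪u + v, (w:E)⟫| / q w ≤ (|⟪u, (w:E)⟫| + |⟪v, (w:E)⟫|) / q w :=
        (div_le_div_iff_of_pos_right hqw).mpr habs
    _ = |⟪u, (w:E)⟫| / q w + |⟪v, (w:E)⟫| / q w := add_div _ _ _
    _ ≤ dualFn q u + dualFn q v :=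
        add_le_add (dual_ratio_le hc hq u w.2) (dual_ratio_le hc hq v w.2)

lemma dual_sum (hd : 0 < d) {q : E → ℝ} {c : ℝ} (hc : 0 < c) (hq : ∀ w, c * ‖w‖ ≤ q w)
    {ι : Type*} (s : Finset ι) (f : ι → E) :
    dualFn q (∑ i ∈ s, f i) ≤ ∑ i ∈ s, dualFn q (f i) := by
  classical
  induction s using Finset.induction with
  | empty => simp [dual_zero hd]
  | insert _ _ h ih =>
    rw [Finset.sum_insert h, Finset.sum_insert h]
    exact le_trans (dual_add hd hc hq _ _) (by linarith)

lemma gm_le {a b a' b' t : ℝ} (ht : 0 < t) (ht' : t < 1) (ha : 0 ≤ a) (ha' : 0 ≤ a')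
    (h : a ≤ b) (h' : a' ≤ b') : a^(1-t) * a'^t ≤ b^(1-t) * b'^t :=
  mul_le_mul (Real.rpow_le_rpow ha h (by linarith)) (Real.rpow_le_rpow ha' h' ht.le)
    (Real.rpow_nonneg ha' t) (Real.rpow_nonneg (ha.trans h) _)

lemma gm_nonneg {a b t : ℝ} (ha : 0 ≤ a) (hb : 0 ≤ b) : 0 ≤ a^(1-t) * b^t :=
  mul_nonneg (Real.rpow_nonneg ha _) (Real.rpow_nonneg hb _)

lemma gm_self {x t : ℝ} (ht : 0 < t) (ht' : t < 1) (hx : 0 ≤ x) : x^(1-t) * x^t = x := by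
  rcases eq_or_lt_of_le hx with h | h
  · rw [← h, Real.zero_rpow (by linarith : (1:ℝ)-t ≠ 0), zero_mul]
  · rw [← Real.rpow_add h]
    norm_num

lemma gm_smul {x a b t : ℝ} (ht : 0 < t) (ht' : t < 1) (hx : 0 ≤ x) (ha : 0 ≤ a) (hb : 0 ≤ b) :
    (x*a)^(1-t) * (x*b)^t = x * (a^(1-t) * b^t) := by
  rw [Real.mul_rpow hx ha, Real.mul_rpow hx hb]
  calc x ^ (1-t) * a ^ (1-t) * (x ^ t * b ^ t)
      = (x ^ (1-t) * x ^ t) * (a ^ (1-t) * b ^ t) := by ring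
    _ = x * (a^(1-t) * b^t) := by rw [gm_self ht ht' hx]

lemma gm_mul {a b a' b' t : ℝ} (ha : 0 ≤ a) (hb : 0 ≤ b) (ha' : 0 ≤ a') (hb' : 0 ≤ b') :
    (a*a')^(1-t) * (b*b')^t = (a^(1-t) * b^t) * (a'^(1-t) * b'^t) := by
  rw [Real.mul_rpow ha ha', Real.mul_rpow hb hb']
  ring

lemma abs_le_gm {z A B t : ℝ} (ht : 0 < t) (ht' : t < 1) (hA : |z| ≤ A) (hB : |z| ≤ B) :
    |z| ≤ A^(1-t) * B^t := by
  have hz := abs_nonneg z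
  rw [← gm_self ht ht' hz]
  exact gm_le ht ht' hz hz hA hB

lemma gm_pos {a b t : ℝ} (ha : 0 < a) (hb : 0 < b) : 0 < a^(1-t) * b^t :=
  mul_pos (Real.rpow_pos_of_pos ha _) (Real.rpow_pos_of_pos hb _)

lemma auerbach (hd : 0 < d) {p : E → ℝ} (hp : IsNormFun p) :
    ∃ T : E ≃ₗ[ℝ] E, (∀ w, p w ≤ Real.sqrt d * ‖T w‖) ∧ ∀ w, ‖T w‖ ≤ Real.sqrt d * p w := by
  classical
  obtain ⟨c, hc, hlow⟩ := nf_lower hd hp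
  set S : Set (Fin d → E) := {f | ∀ i, p (f i) ≤ 1} with hS
  -- compactness
  have hSclosed : IsClosed S := by
    have : S = ⋂ i, (fun f : Fin d → E => p (f i)) ⁻¹' Set.Iic 1 := by
      ext f; simp [hS, Set.mem_iInter]
    rw [this]
    exact isClosed_iInter fun i =>
      IsClosed.preimage ((nf_continuous hp).comp (continuous_apply i)) isClosed_Iic
  have hScompact : IsCompact S := by
    have hK : IsCompact (Set.univ.pi fun _ : Fin d => Metric.closedBall (0:E) (1/c)) :=
      isCompact_univ_pi fun _ => isCompact_closedBall _ _
    refine hK.of_isClosed_subset hSclosed ?_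
    intro f hf
    rw [Set.mem_univ_pi]
    intro i
    rw [Metric.mem_closedBall, dist_zero_right]
    have h1 : c * ‖f i‖ ≤ 1 := (hlow (f i)).trans (hf i)
    rw [le_div_iff₀ hc]
    linarith [mul_comm c ‖f i‖]
  -- determinant functional
  set M : (Fin d → E) → Matrix (Fin d) (Fin d) ℝ := fun f => Matrix.of fun i j => f i j with hM
  have hMcont : Continuous fun f : Fin d → E => |(M f).det| := by
    have : Continuous fun f : Fin d → E => M f := by
      apply continuous_matrix
      intro i j
      exact ((continuous_apply j).comp (PiLp.continuous_ofLp ..)).comp (continuous_apply i)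
    exact (this.matrix_det).abs
  -- a good starting point
  set eb : Fin d → E := fun i => EuclideanSpace.single i (1:ℝ) with heb
  have hebne : ∀ i, eb i ≠ 0 := by
    intro i h
    have := congrArg (fun x : E => ‖x‖) h
    simp [heb, EuclideanSpace.norm_single] at this
  set g : Fin d → E := fun i => (p (eb i))⁻¹ • eb i with hg
  have hgS : g ∈ S := by
    intro i
    have hpos := nf_pos hp (hebne i)
    rw [hg]
    simp only [hp.2.1, abs_of_nonneg (inv_nonneg.mpr hpos.le)]
    rw [inv_mul_cancel₀ hpos.ne']
  have hgdet : (M g).det ≠ 0 := by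
    have : M g = Matrix.diagonal fun i => (p (eb i))⁻¹ := by
      ext i j
      by_cases h : i = j
      · subst h
        simp [hM, hg, heb, Matrix.diagonal, EuclideanSpace.single_apply]
      · simp [hM, hg, heb, Matrix.diagonal, EuclideanSpace.single_apply, h, Ne.symm h]
    rw [this, Matrix.det_diagonal]
    exact Finset.prod_ne_zero_iff.mpr fun i _ =>
      inv_ne_zero (nf_pos hp (hebne i)).ne'
  obtain ⟨v, hvS, hvmax⟩ := hScompact.exists_isMaxOn ⟨g, hgS⟩ hMcont.continuousOn
  set A := M v with hA
  have hdet : A.det ≠ 0 := by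
    intro h
    have h1 : |(M g).det| ≤ |A.det| := hvmax hgS
    rw [h] at h1
    simp only [abs_zero] at h1
    exact hgdet (abs_eq_zero.mp (le_antisymm h1 (abs_nonneg _)))
  have hdetU : IsUnit A.det := isUnit_iff_ne_zero.mpr hdet
  -- the linear equivalence
  set Tl : E →ₗ[ℝ] E := Matrix.toEuclideanLin (A⁻¹)ᵀ with hTl
  set Til : E →ₗ[ℝ] E := Matrix.toEuclideanLin Aᵀ with hTil
  have happ : ∀ (B C : Matrix (Fin d) (Fin d) ℝ) (w : E),
      (Matrix.toEuclideanLin B) ((Matrix.toEuclideanLin C) w) = (Matrix.toEuclideanLin (B*C)) w := by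
    intro B C w
    simp only [Matrix.toEuclideanLin_apply, Equiv.apply_symm_apply]
    exact congrArg (WithLp.equiv 2 (Fin d → ℝ)).symm (Matrix.mulVec_mulVec _ B C)
  have hid : ∀ w : E, (Matrix.toEuclideanLin (1 : Matrix (Fin d) (Fin d) ℝ)) w = w := by
    intro w
    simp only [Matrix.toEuclideanLin_apply, Matrix.one_mulVec, Equiv.symm_apply_apply]
  have hcomp1 : Tl ∘ₗ Til = LinearMap.id := by
    apply LinearMap.ext
    intro w
    rw [LinearMap.comp_apply, hTl, hTil, happ]
    have h1 : (A⁻¹)ᵀ * Aᵀ = 1 := by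
      rw [← Matrix.transpose_mul, Matrix.mul_nonsing_inv A hdetU, Matrix.transpose_one]
    rw [h1, hid]
    rfl
  have hcomp2 : Til ∘ₗ Tl = LinearMap.id := by
    apply LinearMap.ext
    intro w
    rw [LinearMap.comp_apply, hTl, hTil, happ]
    have h1 : Aᵀ * (A⁻¹)ᵀ = 1 := by
      rw [← Matrix.transpose_mul, Matrix.nonsing_inv_mul A hdetU, Matrix.transpose_one]
    rw [h1, hid]
    rfl
  set T : E ≃ₗ[ℝ] E := LinearEquiv.ofLinear Tl Til hcomp1 hcomp2 with hT
  -- coordinates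
  have happly : ∀ (w : E) (i : Fin d), T w i = ∑ j, A⁻¹ j i * w j := by
    intro w i
    show (Matrix.toEuclideanLin (A⁻¹)ᵀ w) i = _
    rw [Matrix.toEuclideanLin_apply]
    simp [Matrix.mulVec, dotProduct, Matrix.transpose_apply]
  have hdecomp : ∀ w : E, ∀ j, (∑ i, (T w i) • v i) j = w j := by
    intro w j
    have : (∑ i, (T w i) • v i) j = ∑ i, (T w i) * v i j := by
      rw [WithLp.ofLp_sum, Finset.sum_apply]
      congr 1
    rw [this]
    have : ∑ i, (T w i) * v i j = ∑ i, (∑ k, A⁻¹ k i * w k) * A i j := by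
      apply Finset.sum_congr rfl
      intro i _
      rw [happly]
      rfl
    rw [this]
    calc ∑ i, (∑ k, A⁻¹ k i * w k) * A i j
        = ∑ i, ∑ k, A⁻¹ k i * w k * A i j := by
          apply Finset.sum_congr rfl; intro i _; rw [Finset.sum_mul]
      _ = ∑ k, ∑ i, A⁻¹ k i * w k * A i j := Finset.sum_comm
      _ = ∑ k, w k * ∑ i, A⁻¹ k i * A i j := by
          apply Finset.sum_congr rfl; intro k _
          rw [Finset.mul_sum]
          apply Finset.sum_congr rfl; intro i _; ring
      _ = ∑ k, w k * (A⁻¹ * A) k j := by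
          apply Finset.sum_congr rfl; intro k _
          rw [Matrix.mul_apply]
      _ = ∑ k, w k * (1 : Matrix (Fin d) (Fin d) ℝ) k j := by
          rw [Matrix.nonsing_inv_mul A hdetU]
      _ = w j := by
          simp [Matrix.one_apply]
  have hdecompE : ∀ w : E, ∑ i, (T w i) • v i = w := by
    intro w
    ext j
    exact hdecomp w j
  have hvA : ∀ i j, v i j = A i j := fun i j => rfl
  -- coefficient bound
  have hcoef : ∀ (w : E) (i : Fin d), |T w i| ≤ p w := by
    intro w i
    rcases eq_or_ne w 0 with rfl | hw
    · rw [map_zero]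
      have : (0 : E) i = 0 := rfl
      rw [this, abs_zero, nf_zero hp]
    · have hpw : 0 < p w := nf_pos hp hw
      set f' := Function.update v i ((p w)⁻¹ • w) with hf'
      have hf'S : f' ∈ S := by
        intro k
        by_cases hk : k = i
        · subst hk
          rw [hf', Function.update_self, hp.2.1,
            abs_of_nonneg (inv_nonneg.mpr hpw.le), inv_mul_cancel₀ hpw.ne']
        · rw [hf', Function.update_of_ne hk]
          exact hvS k
      have hMle : |(M f').det| ≤ |A.det| := hvmax hf'S
      have hrow : (fun j => ((p w)⁻¹ • w : E) j)
          = ∑ k, ((p w)⁻¹ * T w k) • (A k) := by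
        funext j
        rw [Finset.sum_apply]
        show (p w)⁻¹ * w j = _
        rw [← hdecomp w j]
        rw [show (∑ i, T w i • v i) j = ∑ i, T w i * v i j from by
          rw [WithLp.ofLp_sum, Finset.sum_apply]; rfl]
        rw [Finset.mul_sum]
        apply Finset.sum_congr rfl
        intro k _
        show (p w)⁻¹ * (T w k * v k j) = (((p w)⁻¹ * T w k) • (A k)) j
        rw [hvA]
        simp [mul_assoc]
      have hMf' : M f' = A.updateRow i (∑ k, ((p w)⁻¹ * T w k) • (A k)) := by
        rw [← hrow]
        ext a b
        rw [Matrix.updateRow_apply]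
        by_cases ha : a = i
        · subst ha
          rw [if_pos rfl, hf']
          show (Function.update v a ((p w)⁻¹ • w)) a b = _
          rw [Function.update_self]
        · rw [if_neg ha, hf']
          show (Function.update v i ((p w)⁻¹ • w)) a b = A a b
          rw [Function.update_of_ne ha]
          exact hvA a b
      have hdet' : (M f').det = ((p w)⁻¹ * T w i) * A.det := by
        rw [hMf', Matrix.det_updateRow_sum]
        simp
      rw [hdet', abs_mul] at hMle
      have habs : |(p w)⁻¹ * T w i| ≤ 1 := by
        have hAd : 0 < |A.det| := abs_pos.mpr hdet
        nlinarith
      rw [abs_mul, abs_of_nonneg (inv_nonneg.mpr hpw.le)] at habs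
      calc |T w i| = p w * ((p w)⁻¹ * |T w i|) := by field_simp
        _ ≤ p w * 1 := by
            apply mul_le_mul_of_nonneg_left habs hpw.le
        _ = p w := mul_one _
  refine ⟨T, fun w => ?_, fun w => ?_⟩
  · -- p w ≤ √d ‖T w‖
    have h1 : p w ≤ ∑ i, |T w i| := by
      calc p w = p (∑ i, (T w i) • v i) := by rw [hdecompE]
        _ ≤ ∑ i, p ((T w i) • v i) := nf_sum hp _ _
        _ = ∑ i, |T w i| * p (v i) := by simp [hp.2.1]
        _ ≤ ∑ i, |T w i| * 1 := by
            refine Finset.sum_le_sum fun i _ => ?_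
            exact mul_le_mul_of_nonneg_left (hvS i) (abs_nonneg _)
        _ = ∑ i, |T w i| := by simp
    have h2 : ∑ i, |T w i| ≤ Real.sqrt d * Real.sqrt (∑ i, (T w i)^2) :=
      sum_abs_le_sqrt _
    have h3 : Real.sqrt (∑ i, (T w i)^2) = ‖T w‖ := by
      rw [EuclideanSpace.norm_eq]
      congr 1
      apply Finset.sum_congr rfl
      intro i _
      rw [Real.norm_eq_abs, sq_abs]
    calc p w ≤ Real.sqrt d * Real.sqrt (∑ i, (T w i)^2) := le_trans h1 h2
      _ = Real.sqrt d * ‖T w‖ := by rw [h3]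
  · -- ‖T w‖ ≤ √d p w
    rw [EuclideanSpace.norm_eq]
    have h1 : ∑ i, ‖T w i‖^2 ≤ (d : ℝ) * (p w)^2 := by
      calc ∑ i, ‖T w i‖^2 ≤ ∑ _i : Fin d, (p w)^2 := by
            refine Finset.sum_le_sum fun i _ => ?_
            rw [Real.norm_eq_abs]
            have := hcoef w i
            nlinarith [abs_nonneg (T w i)]
        _ = (d : ℝ) * (p w)^2 := by
            rw [Finset.sum_const, Finset.card_univ, Fintype.card_fin, nsmul_eq_mul]
    calc Real.sqrt (∑ i, ‖T w i‖^2) ≤ Real.sqrt ((d:ℝ) * (p w)^2) := Real.sqrt_le_sqrt h1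
      _ = Real.sqrt d * p w := by
          rw [Real.sqrt_mul (by positivity), Real.sqrt_sq (nf_nonneg hp w)]

lemma simdiag (T₀ T₁ : E ≃ₗ[ℝ] E) :
    ∃ (b : OrthonormalBasis (Fin d) ℝ E) (μ : Fin d → ℝ),
      (∀ i, 0 < μ i) ∧
      (∀ i, ‖T₁ (T₀.symm (b i))‖ = Real.sqrt (μ i)) ∧
      (∀ (w : E) (i : Fin d), Real.sqrt (μ i) * |⟪b i, T₀ w⟫| ≤ ‖T₁ w‖) := by
  classical
  set S : E →ₗ[ℝ] E := T₁.toLinearMap ∘ₗ T₀.symm.toLinearMap with hSdef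
  have hSapp : ∀ x : E, S x = T₁ (T₀.symm x) := fun x => rfl
  set B : E →ₗ[ℝ] E := LinearMap.adjoint S ∘ₗ S with hBdef
  have hB : B.IsSymmetric := by
    intro x y
    show ⟪LinearMap.adjoint S (S x), y⟫ = ⟪x, LinearMap.adjoint S (S y)⟫
    rw [LinearMap.adjoint_inner_left, LinearMap.adjoint_inner_right]
  have hn : Module.finrank ℝ (EuclideanSpace ℝ (Fin d)) = d := finrank_euclideanSpace_fin
  set b := hB.eigenvectorBasis hn with hb
  set μ := hB.eigenvalues hn with hμ
  have heig : ∀ i, B (b i) = μ i • b i := by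
    intro i
    have h := hB.apply_eigenvectorBasis hn i
    exact_mod_cast h
  have key1 : ∀ x : E, ⟪B x, x⟫ = ‖S x‖^2 := by
    intro x
    show ⟪LinearMap.adjoint S (S x), x⟫ = _
    rw [LinearMap.adjoint_inner_left]
    exact real_inner_self_eq_norm_sq _
  have hbnorm : ∀ i, ‖b i‖ = 1 := fun i => b.orthonormal.1 i
  have key2 : ∀ i, μ i = ‖S (b i)‖^2 := by
    intro i
    rw [← key1 (b i), heig i, real_inner_smul_left, real_inner_self_eq_norm_sq,
      hbnorm i]
    ring
  have hSinj : Function.Injective S := by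
    intro x y h
    rw [hSapp, hSapp] at h
    exact T₀.symm.injective (T₁.injective h)
  have hμpos : ∀ i, 0 < μ i := by
    intro i
    rw [key2 i]
    have hbne : b i ≠ 0 := by
      intro h
      have := hbnorm i
      rw [h] at this; simp at this
    have hne : S (b i) ≠ 0 := fun h => hbne (hSinj (by rw [h, map_zero]))
    exact pow_pos (norm_pos_iff.mpr hne) 2
  have quad : ∀ x : E, ⟪B x, x⟫ = ∑ j, μ j * ⟪b j, x⟫^2 := by
    intro x
    have hBx : B x = ∑ j, (⟪b j, x⟫ * μ j) • b j := by
      conv_lhs => rw [← b.sum_repr' x]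
      rw [map_sum]
      apply Finset.sum_congr rfl
      intro j _
      rw [map_smul, heig j, smul_smul]
    rw [hBx, sum_inner]
    apply Finset.sum_congr rfl
    intro j _
    rw [real_inner_smul_left]
    ring
  refine ⟨b, μ, hμpos, fun i => ?_, fun w i => ?_⟩
  · rw [← hSapp, key2 i, Real.sqrt_sq (norm_nonneg _)]
  · have h1 : ‖T₁ w‖^2 = ⟪B (T₀ w), T₀ w⟫ := by
      rw [key1, hSapp, T₀.symm_apply_apply]
    have h2 : μ i * ⟪b i, T₀ w⟫^2 ≤ ∑ j, μ j * ⟪b j, T₀ w⟫^2 := by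
      apply Finset.single_le_sum (f := fun j => μ j * ⟪b j, T₀ w⟫^2) ?_ (Finset.mem_univ i)
      intro j _
      have := (hμpos j).le
      positivity
    have h3 : (Real.sqrt (μ i) * |⟪b i, T₀ w⟫|)^2 ≤ ‖T₁ w‖^2 := by
      rw [mul_pow, Real.sq_sqrt (hμpos i).le, sq_abs, h1, quad]
      exact h2
    have h4 : 0 ≤ Real.sqrt (μ i) * |⟪b i, T₀ w⟫| := by positivity
    nlinarith [norm_nonneg (T₁ w)]

end DDGM

/-- For norms `p₀, p₁` on ℝ^d and `0 < t < 1`, the double dual of the geometric mean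
`p_t = p₀^{1-t} p₁^t` is equivalent, with constants depending only on `d`, to the dual
of the geometric mean of the dual norms. -/
theorem double_dual_geometric_mean_equiv (d : ℕ) :
    ∃ c C : ℝ, 0 < c ∧ 0 < C ∧
      ∀ (p₀ p₁ : EuclideanSpace ℝ (Fin d) → ℝ), IsNormFun p₀ → IsNormFun p₁ →
        ∀ t : ℝ, 0 < t → t < 1 → ∀ v,
          c * dualFn (fun w => dualFn p₀ w ^ (1 - t) * dualFn p₁ w ^ t) v ≤
            dualFn (dualFn (fun w => p₀ w ^ (1 - t) * p₁ w ^ t)) v ∧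
          dualFn (dualFn (fun w => p₀ w ^ (1 - t) * p₁ w ^ t)) v ≤
            C * dualFn (fun w => dualFn p₀ w ^ (1 - t) * dualFn p₁ w ^ t) v := by
  classical
  refine ⟨1, (d:ℝ)^2 + 1, one_pos, by positivity, ?_⟩
  intro p₀ p₁ hp₀ hp₁ t ht ht' v
  by_cases hd0 : d = 0
  · subst hd0
    haveI : IsEmpty {w : EuclideanSpace ℝ (Fin 0) // w ≠ 0} := by
      constructor
      rintro ⟨w, hw⟩
      exact hw (PiLp.ext fun i => i.elim0)
    constructor
    · rw [dualFn, dualFn, Real.iSup_of_isEmpty, Real.iSup_of_isEmpty]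
      norm_num
    · rw [dualFn, dualFn, Real.iSup_of_isEmpty, Real.iSup_of_isEmpty]
      positivity
  have hd : 0 < d := Nat.pos_of_ne_zero hd0
  set P : EuclideanSpace ℝ (Fin d) → ℝ := fun w => p₀ w ^ (1 - t) * p₁ w ^ t with hPdef
  set Q : EuclideanSpace ℝ (Fin d) → ℝ :=
    fun w => dualFn p₀ w ^ (1 - t) * dualFn p₁ w ^ t with hQdef
  obtain ⟨c₀, hc₀, hlow₀⟩ := DDGM.nf_lower hd hp₀
  obtain ⟨C₀, hC₀, hup₀⟩ := DDGM.nf_upper hp₀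
  obtain ⟨c₁, hc₁, hlow₁⟩ := DDGM.nf_lower hd hp₁
  obtain ⟨C₁, hC₁, hup₁⟩ := DDGM.nf_upper hp₁
  have hgm_norm : ∀ (a b : ℝ), 0 ≤ a → 0 ≤ b → ∀ w : EuclideanSpace ℝ (Fin d),
      (a*‖w‖)^(1-t) * (b*‖w‖)^t = (a^(1-t)*b^t) * ‖w‖ := by
    intro a b ha hb w
    rw [mul_comm a ‖w‖, mul_comm b ‖w‖, DDGM.gm_smul ht ht' (norm_nonneg w) ha hb, mul_comm]
  -- bounds for P
  have hcP : 0 < c₀^(1-t)*c₁^t := DDGM.gm_pos hc₀ hc₁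
  have hCP : 0 < C₀^(1-t)*C₁^t := DDGM.gm_pos hC₀ hC₁
  have hPlow : ∀ w, (c₀^(1-t)*c₁^t) * ‖w‖ ≤ P w := by
    intro w
    rw [← hgm_norm c₀ c₁ hc₀.le hc₁.le w]
    exact DDGM.gm_le ht ht' (by positivity) (by positivity) (hlow₀ w) (hlow₁ w)
  have hPup : ∀ w, P w ≤ (C₀^(1-t)*C₁^t) * ‖w‖ := by
    intro w
    rw [← hgm_norm C₀ C₁ hC₀.le hC₁.le w]
    exact DDGM.gm_le ht ht' (DDGM.nf_nonneg hp₀ w) (DDGM.nf_nonneg hp₁ w) (hup₀ w) (hup₁ w)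
  have hPpos : ∀ w : EuclideanSpace ℝ (Fin d), w ≠ 0 → 0 < P w := by
    intro w hw
    have : (0:ℝ) < (c₀^(1-t)*c₁^t) * ‖w‖ := by
      have := norm_pos_iff.mpr hw; positivity
    exact lt_of_lt_of_le this (hPlow w)
  -- bounds for dual norms
  have hq₀low : ∀ w, (1/C₀) * ‖w‖ ≤ dualFn p₀ w := by
    intro w
    have := DDGM.dual_lower hc₀ hC₀ hlow₀ hup₀ w
    calc (1/C₀) * ‖w‖ = ‖w‖ / C₀ := by ring
      _ ≤ dualFn p₀ w := this
  have hq₁low : ∀ w, (1/C₁) * ‖w‖ ≤ dualFn p₁ w := by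
    intro w
    have := DDGM.dual_lower hc₁ hC₁ hlow₁ hup₁ w
    calc (1/C₁) * ‖w‖ = ‖w‖ / C₁ := by ring
      _ ≤ dualFn p₁ w := this
  have hq₀nn : ∀ w, 0 ≤ dualFn p₀ w := fun w =>
    le_trans (by positivity) (hq₀low w)
  have hq₁nn : ∀ w, 0 ≤ dualFn p₁ w := fun w =>
    le_trans (by positivity) (hq₁low w)
  -- bounds for Q
  have hcQ : 0 < (1/C₀)^(1-t)*(1/C₁)^t := DDGM.gm_pos (by positivity) (by positivity)
  have hQlow : ∀ w, ((1/C₀)^(1-t)*(1/C₁)^t) * ‖w‖ ≤ Q w := by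
    intro w
    rw [← hgm_norm (1/C₀) (1/C₁) (by positivity) (by positivity) w]
    exact DDGM.gm_le ht ht' (by positivity) (by positivity) (hq₀low w) (hq₁low w)
  have hQpos : ∀ w : EuclideanSpace ℝ (Fin d), w ≠ 0 → 0 < Q w := by
    intro w hw
    have h1 : (0:ℝ) < ((1/C₀)^(1-t)*(1/C₁)^t) * ‖w‖ := by
      have := norm_pos_iff.mpr hw; positivity
    exact lt_of_lt_of_le h1 (hQlow w)
  -- bounds for dualFn P
  have hcDP : (0:ℝ) < 1/(C₀^(1-t)*C₁^t) := by positivity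
  have hDPlow : ∀ w, (1/(C₀^(1-t)*C₁^t)) * ‖w‖ ≤ dualFn P w := by
    intro w
    have := DDGM.dual_lower hcP hCP hPlow hPup w
    calc (1/(C₀^(1-t)*C₁^t)) * ‖w‖ = ‖w‖ / (C₀^(1-t)*C₁^t) := by ring
      _ ≤ dualFn P w := this
  have hDPpos : ∀ w : EuclideanSpace ℝ (Fin d), w ≠ 0 → 0 < dualFn P w := by
    intro w hw
    have h1 : (0:ℝ) < (1/(C₀^(1-t)*C₁^t)) * ‖w‖ := by
      have := norm_pos_iff.mpr hw; positivity
    exact lt_of_lt_of_le h1 (hDPlow w)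
  have hDDPnn : 0 ≤ dualFn (dualFn P) v :=
    DDGM.dual_nonneg (fun w => le_trans (by positivity) (hDPlow w)) v
  -- EASY DIRECTION
  have hPd_le_Q : ∀ w, dualFn P w ≤ Q w := by
    intro w
    apply DDGM.dual_le hd hPpos
    intro x hx
    have h₀ := DDGM.dual_pairing hc₀ hlow₀ w hx
    have h₁ := DDGM.dual_pairing hc₁ hlow₁ w hx
    calc |⟪w, x⟫| ≤ (dualFn p₀ w * p₀ x)^(1-t) * (dualFn p₁ w * p₁ x)^t :=
          DDGM.abs_le_gm ht ht' h₀ h₁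
      _ = Q w * P x := DDGM.gm_mul (hq₀nn w) (hq₁nn w)
          (DDGM.nf_nonneg hp₀ x) (DDGM.nf_nonneg hp₁ x)
  have easy : dualFn Q v ≤ dualFn (dualFn P) v := by
    apply DDGM.dual_le hd hQpos
    intro w hw
    have h1 : |⟪v, w⟫| ≤ dualFn (dualFn P) v * dualFn P w :=
      DDGM.dual_pairing hcDP hDPlow v hw
    have h2 := hPd_le_Q w
    nlinarith
  refine ⟨by rw [one_mul]; exact easy, ?_⟩
  -- HARD DIRECTION
  obtain ⟨T₀, hT₀a, hT₀b⟩ := DDGM.auerbach hd hp₀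
  obtain ⟨T₁, hT₁a, hT₁b⟩ := DDGM.auerbach hd hp₁
  obtain ⟨b, μ, hμpos, hμnorm, hμlow⟩ := DDGM.simdiag T₀ T₁
  set sd := Real.sqrt d with hsd
  have hsdpos : 0 < sd := Real.sqrt_pos.mpr (by exact_mod_cast hd)
  set cc : Fin d → ℝ := fun i => ⟪b i, T₀ v⟫ with hcc
  set u : Fin d → EuclideanSpace ℝ (Fin d) := fun i => T₀.symm (b i) with hu
  have huval : ∀ i, u i = T₀.symm (b i) := fun i => rfl
  have hbnorm : ∀ i, ‖b i‖ = 1 := fun i => b.orthonormal.1 i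
  have hT₀u : ∀ i, T₀ (u i) = b i := fun i => T₀.apply_symm_apply (b i)
  have hdecomp : v = ∑ i, cc i • u i := by
    have h1 : ∑ i, cc i • b i = T₀ v := b.sum_repr' (T₀ v)
    calc v = T₀.symm (T₀ v) := (T₀.symm_apply_apply v).symm
      _ = T₀.symm (∑ i, cc i • b i) := by rw [h1]
      _ = ∑ i, cc i • u i := by
          rw [map_sum]
          exact Finset.sum_congr rfl fun i _ => by rw [map_smul, huval]
  have hddP_le_P : ∀ x, dualFn (dualFn P) x ≤ P x := by
    intro x
    apply DDGM.dual_le hd hDPpos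
    intro w hw
    rcases eq_or_ne x 0 with rfl | hx
    · simp only [inner_zero_left, abs_zero]
      exact mul_nonneg (DDGM.gm_nonneg (DDGM.nf_nonneg hp₀ _) (DDGM.nf_nonneg hp₁ _))
        (DDGM.dual_nonneg (fun y => DDGM.gm_nonneg (DDGM.nf_nonneg hp₀ y)
          (DDGM.nf_nonneg hp₁ y)) w)
    · have h := DDGM.dual_pairing hcP hPlow w hx
      rw [real_inner_comm] at h
      calc |⟪x, w⟫| ≤ dualFn P w * P x := h
        _ = P x * dualFn P w := mul_comm _ _
  set y : Fin d → ℝ := fun i => |cc i| * Real.sqrt (μ i) ^ t with hy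
  have hynn : ∀ i, 0 ≤ y i := fun i =>
    mul_nonneg (abs_nonneg _) (Real.rpow_nonneg (Real.sqrt_nonneg _) _)
  have hPu : ∀ i, P (u i) ≤ sd * Real.sqrt (μ i) ^ t := by
    intro i
    have h0 : p₀ (u i) ≤ sd * 1 := by
      have := hT₀a (u i)
      rw [hT₀u i, hbnorm i, mul_one] at this
      rw [mul_one]; exact this
    have h1 : p₁ (u i) ≤ sd * Real.sqrt (μ i) := by
      have := hT₁a (u i)
      rw [huval i, hμnorm i] at this
      exact this
    calc P (u i) = p₀ (u i)^(1-t) * p₁ (u i)^t := rfl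
      _ ≤ (sd * 1)^(1-t) * (sd * Real.sqrt (μ i))^t :=
          DDGM.gm_le ht ht' (DDGM.nf_nonneg hp₀ _) (DDGM.nf_nonneg hp₁ _) h0 h1
      _ = sd * ((1:ℝ)^(1-t) * Real.sqrt (μ i)^t) :=
          DDGM.gm_smul ht ht' hsdpos.le zero_le_one (Real.sqrt_nonneg _)
      _ = sd * Real.sqrt (μ i)^t := by rw [Real.one_rpow, one_mul]
  have hsum : dualFn (dualFn P) v ≤ (∑ i, y i) * sd := by
    calc dualFn (dualFn P) v = dualFn (dualFn P) (∑ i, cc i • u i) := by rw [← hdecomp]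
      _ ≤ ∑ i, dualFn (dualFn P) (cc i • u i) := DDGM.dual_sum hd hcDP hDPlow _ _
      _ ≤ ∑ i, y i * sd := by
          refine Finset.sum_le_sum fun i _ => ?_
          have h1 : dualFn (dualFn P) (cc i • u i) ≤ P (cc i • u i) := hddP_le_P _
          have h2 : P (cc i • u i) = |cc i| * P (u i) := by
            show p₀ (cc i • u i)^(1-t) * p₁ (cc i • u i)^t = _
            rw [hp₀.2.1, hp₁.2.1,
              DDGM.gm_smul ht ht' (abs_nonneg _) (DDGM.nf_nonneg hp₀ _) (DDGM.nf_nonneg hp₁ _)]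
          have h3 : |cc i| * P (u i) ≤ |cc i| * (sd * Real.sqrt (μ i) ^ t) :=
            mul_le_mul_of_nonneg_left (hPu i) (abs_nonneg _)
          calc dualFn (dualFn P) (cc i • u i) ≤ |cc i| * (sd * Real.sqrt (μ i) ^ t) := by
                rw [← h2] at h3; exact le_trans h1 h3
            _ = y i * sd := by rw [hy]; ring
      _ = (∑ i, y i) * sd := by rw [Finset.sum_mul]
  obtain ⟨I, _, hImax⟩ := Finset.exists_max_image (Finset.univ : Finset (Fin d)) y
    ⟨⟨0, hd⟩, Finset.mem_univ _⟩
  have hsum2 : ∑ i, y i ≤ (d:ℝ) * y I := by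
    calc ∑ i, y i ≤ ∑ _i : Fin d, y I :=
          Finset.sum_le_sum fun i _ => hImax i (Finset.mem_univ i)
      _ = (d:ℝ) * y I := by
          rw [Finset.sum_const, Finset.card_univ, Fintype.card_fin, nsmul_eq_mul]
  -- the dual test vector
  set wstar := LinearMap.adjoint (T₀ : EuclideanSpace ℝ (Fin d) →ₗ[ℝ] EuclideanSpace ℝ (Fin d))
    (b I) with hws
  have hwinner : ∀ x, ⟪wstar, x⟫ = ⟪b I, T₀ x⟫ := by
    intro x
    rw [hws, LinearMap.adjoint_inner_left]
    rfl
  have hwne : wstar ≠ 0 := by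
    intro h
    have h1 : ⟪wstar, u I⟫ = 1 := by
      rw [hwinner, huval, T₀.apply_symm_apply, real_inner_self_eq_norm_sq, hbnorm I]
      norm_num
    rw [h] at h1
    simp at h1
  have hsqI : 0 < Real.sqrt (μ I) := Real.sqrt_pos.mpr (hμpos I)
  have hqd₀ : dualFn p₀ wstar ≤ sd * 1 := by
    rw [mul_one]
    apply DDGM.dual_le hd (fun x hx => DDGM.nf_pos hp₀ hx)
    intro x hx
    calc |⟪wstar, x⟫| = |⟪b I, T₀ x⟫| := by rw [hwinner]
      _ ≤ ‖b I‖ * ‖T₀ x‖ := abs_real_inner_le_norm _ _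
      _ = ‖T₀ x‖ := by rw [hbnorm I, one_mul]
      _ ≤ sd * p₀ x := hT₀b x
  have hqd₁ : dualFn p₁ wstar ≤ sd * (Real.sqrt (μ I))⁻¹ := by
    apply DDGM.dual_le hd (fun x hx => DDGM.nf_pos hp₁ hx)
    intro x hx
    have h1 : Real.sqrt (μ I) * |⟪b I, T₀ x⟫| ≤ ‖T₁ x‖ := hμlow x I
    have h2 : ‖T₁ x‖ ≤ sd * p₁ x := hT₁b x
    rw [hwinner]
    calc |⟪b I, T₀ x⟫| = (|⟪b I, T₀ x⟫| * Real.sqrt (μ I)) * (Real.sqrt (μ I))⁻¹ := by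
          field_simp
      _ ≤ (sd * p₁ x) * (Real.sqrt (μ I))⁻¹ := by
          apply mul_le_mul_of_nonneg_right ?_ (inv_nonneg.mpr hsqI.le)
          nlinarith
      _ = sd * (Real.sqrt (μ I))⁻¹ * p₁ x := by ring
  have hQw : Q wstar ≤ sd * ((Real.sqrt (μ I))^t)⁻¹ := by
    calc Q wstar = dualFn p₀ wstar ^(1-t) * dualFn p₁ wstar ^ t := rfl
      _ ≤ (sd*1)^(1-t) * (sd * (Real.sqrt (μ I))⁻¹)^t :=
          DDGM.gm_le ht ht' (hq₀nn wstar) (hq₁nn wstar) hqd₀ hqd₁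
      _ = sd * ((1:ℝ)^(1-t) * ((Real.sqrt (μ I))⁻¹)^t) :=
          DDGM.gm_smul ht ht' hsdpos.le zero_le_one (inv_nonneg.mpr hsqI.le)
      _ = sd * ((Real.sqrt (μ I))^t)⁻¹ := by
          rw [Real.one_rpow, one_mul, ← Real.inv_rpow (Real.sqrt_nonneg _)]
  have hQwpos : 0 < Q wstar := hQpos wstar hwne
  have hsqtpos : 0 < (Real.sqrt (μ I))^t := Real.rpow_pos_of_pos hsqI t
  have hlower : y I ≤ sd * dualFn Q v := by
    have h1 : |⟪v, wstar⟫| / Q wstar ≤ dualFn Q v := DDGM.dual_ratio_le hcQ hQlow v hwne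
    have h2 : ⟪v, wstar⟫ = cc I := by rw [real_inner_comm, hwinner]
    have h3 : |cc I| / (sd * ((Real.sqrt (μ I))^t)⁻¹) ≤ |cc I| / Q wstar :=
      div_le_div_of_nonneg_left (abs_nonneg _) hQwpos hQw
    have h4 : |cc I| / (sd * ((Real.sqrt (μ I))^t)⁻¹) = y I / sd := by
      rw [hy]
      field_simp
    rw [h2] at h1
    have h5 : y I / sd ≤ dualFn Q v := by
      rw [← h4]
      exact le_trans h3 h1
    rw [div_le_iff₀ hsdpos] at h5
    linarith [mul_comm (dualFn Q v) sd]
  have hQvnn : 0 ≤ dualFn Q v :=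
    DDGM.dual_nonneg (fun w => le_trans (by positivity) (hQlow w)) v
  have hsdsq : sd * sd = (d:ℝ) := Real.mul_self_sqrt (by positivity)
  calc dualFn (dualFn P) v ≤ (∑ i, y i) * sd := hsum
    _ ≤ ((d:ℝ) * y I) * sd := mul_le_mul_of_nonneg_right hsum2 hsdpos.le
    _ ≤ ((d:ℝ) * (sd * dualFn Q v)) * sd := by
        have : (d:ℝ) * y I ≤ (d:ℝ) * (sd * dualFn Q v) :=
          mul_le_mul_of_nonneg_left hlower (by positivity)
        exact mul_le_mul_of_nonneg_right this hsdpos.le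
    _ = (d:ℝ) * (sd * sd) * dualFn Q v := by ring
    _ = (d:ℝ)^2 * dualFn Q v := by rw [hsdsq]; ring
    _ ≤ ((d:ℝ)^2 + 1) * dualFn Q v := by nlinarith
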